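/- Let α, β ≥ -1/2 and m, n ≥ 0 be integers. There exist a constant C and a constant ζ > 0 (both depending only on α, β, m, n), where in the exceptional case m = n = 0 and α+β = -1 one takes ζ = 0, such that for all θ, φ ∈ (0,π), u, v ∈ [-1,1] and t > 0: |∂_θ^n ∂_t^m Ψ^{α,β}(t, q(θ,φ,u,v))| ≤ C (t² + q(θ,φ,u,v))^{-(α+β+3/2)-(m+n)/2} when t ≤ 1, and |∂_θ^n ∂_t^m Ψ^{α,β}(t, q(θ,φ,u,v))| ≤ C exp(-ζ t) when t > 1. -/

import Mathlib

open MeasureTheory Real Set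

noncomputable section

/-- The Jacobi measure `μ_{α,β}^+` on `(0,π)`: density
`(sin(θ/2))^(2α+1) (cos(θ/2))^(2β+1)` w.r.t. Lebesgue measure on `(0,π)`. -/
def jacobiMeasure (α β : ℝ) : Measure ℝ :=
  (volume.restrict (Ioo 0 π)).withDensity
    (fun θ => ENNReal.ofReal (Real.sin (θ / 2) ^ (2 * α + 1) * Real.cos (θ / 2) ^ (2 * β + 1)))

/-- The ball `B(θ,r) = (θ-r, θ+r) ∩ (0,π)`. -/
def jacobiBall (θ r : ℝ) : Set ℝ := Ioo (θ - r) (θ + r) ∩ Ioo 0 π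

/-- The measure `Π_α` on `[-1,1]`. -/
def PiMeasure (α : ℝ) : Measure ℝ :=
  if α = -(1 / 2) then (2 : ENNReal)⁻¹ • (Measure.dirac (-1) + Measure.dirac 1)
  else
    (volume.restrict (Icc (-1) 1)).withDensity
      (fun u => ENNReal.ofReal
        (Real.Gamma (α + 1) / (Real.sqrt π * Real.Gamma (α + 1 / 2)) * (1 - u ^ 2) ^ (α - 1 / 2)))

/-- `q(θ,φ,u,v) = 1 - u sin(θ/2) sin(φ/2) - v cos(θ/2) cos(φ/2)`. -/
def qfun (θ φ u v : ℝ) : ℝ :=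
  1 - u * Real.sin (θ / 2) * Real.sin (φ / 2) - v * Real.cos (θ / 2) * Real.cos (φ / 2)

/-- `Ψ^{α,β}(t,s) = sinh(t/2) / (cosh(t/2) - 1 + s)^(α+β+2)`. -/
def Psi (α β t s : ℝ) : ℝ :=
  Real.sinh (t / 2) / (Real.cosh (t / 2) - 1 + s) ^ (α + β + 2)

/-- The Jacobi-Poisson kernel `H_t^{α,β}(θ,φ)`. -/
def Hker (α β t θ φ : ℝ) : ℝ :=
  ((2 : ℝ) ^ (-(α + β + 2)) / (jacobiMeasure α β (Ioo 0 π)).toReal) * Real.sinh (t / 2) *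
    ∫ u, ∫ v, 1 / (Real.cosh (t / 2) - 1 + qfun θ φ u v) ^ (α + β + 2)
      ∂(PiMeasure β) ∂(PiMeasure α)

/-- The symmetrized kernel `H̃_t^{α,β}(θ,φ) = (1/4) sin θ sin φ H_t^{α+1,β+1}(θ,φ)`. -/
def Htilde (α β t θ φ : ℝ) : ℝ :=
  (1 / 4) * Real.sin θ * Real.sin φ * Hker (α + 1) (β + 1) t θ φ

end

namespace PsiAux

structure Mono where
  c : ℝ
  j : ℕ
  a : ℕ
  e : ℕ
  f : ℕ
  k : ℕ

noncomputable def xx (t : ℝ) : ℝ := Real.exp (-(t/2))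

lemma xx_pos (t : ℝ) : 0 < xx t := Real.exp_pos _

lemma xx_lt_one {t : ℝ} (ht : 0 < t) : xx t < 1 := by
  rw [xx, Real.exp_lt_one_iff]; linarith

noncomputable def Efn (t qv : ℝ) : ℝ := (1 - xx t)^2 + 2 * xx t * qv

lemma Efn_pos {t qv : ℝ} (ht : 0 < t) (hq : 0 ≤ qv) : 0 < Efn t qv := by
  have h1 := xx_pos t
  have h2 := xx_lt_one ht
  have h3 : 0 < (1 - xx t)^2 := by nlinarith
  have h4 : 0 ≤ 2 * xx t * qv := by positivity
  unfold Efn; linarith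

noncomputable def Mono.ev (γ : ℝ) (M : Mono) (t qv q1v : ℝ) : ℝ :=
  M.c * xx t ^ (γ - 1 + (M.j:ℝ)) * (1 - xx t)^M.a * q1v^M.e * qv^M.f *
    Efn t qv ^ (-(γ + (M.k:ℝ)))

noncomputable def dTm (γ : ℝ) (M : Mono) : List Mono :=
  [⟨-(M.c * (γ - 1 + M.j)) / 2, M.j, M.a, M.e, M.f, M.k⟩,
   ⟨M.c * M.a / 2, M.j+1, M.a - 1, M.e, M.f, M.k⟩,
   ⟨-(M.c * (γ + M.k)), M.j+1, M.a+1, M.e, M.f, M.k+1⟩,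
   ⟨M.c * (γ + M.k), M.j+1, M.a, M.e, M.f+1, M.k+1⟩]

noncomputable def dXm (γ : ℝ) (M : Mono) : List Mono :=
  [⟨M.c * M.e / 4, M.j, M.a, M.e - 1, M.f, M.k⟩,
   ⟨-(M.c * M.e) / 4, M.j, M.a, M.e - 1, M.f + 1, M.k⟩,
   ⟨M.c * M.f, M.j, M.a, M.e + 1, M.f - 1, M.k⟩,
   ⟨-(2 * M.c * (γ + M.k)), M.j + 1, M.a, M.e + 1, M.f, M.k + 1⟩]

noncomputable def evL (γ : ℝ) (L : List Mono) (t qv q1v : ℝ) : ℝ :=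
  (L.map (fun M => M.ev γ t qv q1v)).sum

noncomputable def dT (γ : ℝ) (L : List Mono) : List Mono := L.flatMap (dTm γ)
noncomputable def dX (γ : ℝ) (L : List Mono) : List Mono := L.flatMap (dXm γ)

lemma hasDerivAt_xx (t : ℝ) : HasDerivAt xx (-(xx t)/2) t := by
  have h : HasDerivAt (fun s : ℝ => -(s/2)) (-(1/2)) t := by
    exact (((hasDerivAt_id t).div_const 2).neg).congr_deriv (by norm_num)
  have h2 := h.exp
  unfold xx
  convert h2 using 1
  ring

lemma hasDerivAt_one_sub_xx (t : ℝ) : HasDerivAt (fun s => 1 - xx s) (xx t / 2) t := by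
  simpa [neg_div] using (hasDerivAt_xx t).const_sub 1

lemma hasDerivAt_ev_t (γ : ℝ) (M : Mono) {t : ℝ} (ht : 0 < t) {qv : ℝ} (hq : 0 ≤ qv)
    (q1v : ℝ) :
    HasDerivAt (fun t' => M.ev γ t' qv q1v) (evL γ (dTm γ M) t qv q1v) t := by
  have hx0 := xx_pos t
  have hE := Efn_pos ht hq
  have hxd := hasDerivAt_xx t
  have h2a := hasDerivAt_one_sub_xx t
  have h1 : HasDerivAt (fun t' => xx t' ^ (γ - 1 + (M.j:ℝ)))
      (-(xx t)/2 * (γ - 1 + (M.j:ℝ)) * xx t ^ (γ - 1 + (M.j:ℝ) - 1)) t :=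
    hxd.rpow_const (Or.inl hx0.ne')
  have h2 : HasDerivAt (fun t' => (1 - xx t') ^ M.a)
      ((M.a : ℝ) * (1 - xx t)^(M.a - 1) * (xx t / 2)) t := h2a.pow M.a
  have h3 : HasDerivAt (fun t' => Efn t' qv)
      ((2:ℝ) * (1 - xx t)^(2-1) * (xx t / 2) + 2 * (-(xx t)/2) * qv) t := by
    exact (h2a.pow 2).add ((hxd.const_mul 2).mul_const qv)
  have h4 : HasDerivAt (fun t' => Efn t' qv ^ (-(γ + (M.k:ℝ))))
      (((2:ℝ) * (1 - xx t)^(2-1) * (xx t / 2) + 2 * (-(xx t)/2) * qv) * (-(γ + (M.k:ℝ)))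
        * Efn t qv ^ (-(γ + (M.k:ℝ)) - 1)) t := h3.rpow_const (Or.inl hE.ne')
  have h5 := ((((h1.const_mul M.c).mul h2).mul_const (q1v ^ M.e)).mul_const (qv ^ M.f)).mul h4
  refine h5.congr_deriv ?_
  simp only [Pi.mul_apply]
  have e1 : xx t ^ (γ - 1 + (M.j:ℝ) - 1) = xx t ^ (γ - 1 + (M.j:ℝ)) / xx t := by
    rw [Real.rpow_sub hx0, Real.rpow_one]
  have e2 : Efn t qv ^ (-(γ + (M.k:ℝ)) - 1) = Efn t qv ^ (-(γ + (M.k:ℝ))) / Efn t qv := by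
    rw [Real.rpow_sub hE, Real.rpow_one]
  have e3 : ∀ i : ℕ, xx t ^ (γ - 1 + ((i:ℝ) + 1)) = xx t ^ (γ - 1 + (i:ℝ)) * xx t := by
    intro i
    rw [show γ - 1 + ((i:ℝ) + 1) = (γ - 1 + (i:ℝ)) + 1 by ring, Real.rpow_add_one hx0.ne']
  have e4 : ∀ i : ℕ, Efn t qv ^ (-(γ + ((i:ℝ) + 1))) =
      Efn t qv ^ (-(γ + (i:ℝ))) / Efn t qv := by
    intro i
    rw [show -(γ + ((i:ℝ) + 1)) = -(γ + (i:ℝ)) - 1 by ring, Real.rpow_sub hE, Real.rpow_one]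
  simp only [evL, dTm, Mono.ev, List.map_cons, List.map_nil, List.sum_cons, List.sum_nil]
  push_cast
  rw [e1, e2, e3, e4]
  field_simp
  ring

lemma hasDerivAt_ev_x (γ : ℝ) (M : Mono) {t : ℝ} (ht : 0 < t) {Q Q1 : ℝ → ℝ} {θ : ℝ}
    (hQd : HasDerivAt Q (Q1 θ) θ) (hQ1d : HasDerivAt Q1 ((1 - Q θ)/4) θ)
    (hq : 0 ≤ Q θ) :
    HasDerivAt (fun θ' => M.ev γ t (Q θ') (Q1 θ'))
      (evL γ (dXm γ M) t (Q θ) (Q1 θ)) θ := by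
  have hx0 := xx_pos t
  have hE := Efn_pos ht hq
  have h1 : HasDerivAt (fun θ' => (Q1 θ')^M.e)
      ((M.e:ℝ) * Q1 θ^(M.e-1) * ((1 - Q θ)/4)) θ := hQ1d.pow M.e
  have h2 : HasDerivAt (fun θ' => (Q θ')^M.f)
      ((M.f:ℝ) * Q θ^(M.f-1) * Q1 θ) θ := hQd.pow M.f
  have h3 : HasDerivAt (fun θ' => Efn t (Q θ'))
      (2 * xx t * Q1 θ) θ := by
    have := (hQd.const_mul (2 * xx t)).const_add ((1 - xx t)^2)
    simpa [Efn, mul_assoc] using this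
  have h4 : HasDerivAt (fun θ' => Efn t (Q θ') ^ (-(γ + (M.k:ℝ))))
      ((2 * xx t * Q1 θ) * (-(γ + (M.k:ℝ))) * Efn t (Q θ) ^ (-(γ + (M.k:ℝ)) - 1)) θ :=
    h3.rpow_const (Or.inl hE.ne')
  have h5 := ((h1.const_mul
      (M.c * xx t ^ (γ - 1 + (M.j:ℝ)) * (1 - xx t)^M.a)).mul h2).mul h4
  refine h5.congr_deriv ?_
  simp only [Pi.mul_apply]
  have e2 : Efn t (Q θ) ^ (-(γ + (M.k:ℝ)) - 1) =
      Efn t (Q θ) ^ (-(γ + (M.k:ℝ))) / Efn t (Q θ) := by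
    rw [Real.rpow_sub hE, Real.rpow_one]
  have e3 : ∀ i : ℕ, xx t ^ (γ - 1 + ((i:ℝ) + 1)) = xx t ^ (γ - 1 + (i:ℝ)) * xx t := by
    intro i
    rw [show γ - 1 + ((i:ℝ) + 1) = (γ - 1 + (i:ℝ)) + 1 by ring, Real.rpow_add_one hx0.ne']
  have e4 : ∀ i : ℕ, Efn t (Q θ) ^ (-(γ + ((i:ℝ) + 1))) =
      Efn t (Q θ) ^ (-(γ + (i:ℝ))) / Efn t (Q θ) := by
    intro i
    rw [show -(γ + ((i:ℝ) + 1)) = -(γ + (i:ℝ)) - 1 by ring, Real.rpow_sub hE, Real.rpow_one]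
  simp only [evL, dXm, Mono.ev, List.map_cons, List.map_nil, List.sum_cons, List.sum_nil]
  push_cast
  rw [e2, e3, e4]
  simp only [pow_succ]
  field_simp
  ring

lemma evL_nil (γ t qv q1v : ℝ) : evL γ [] t qv q1v = 0 := by simp [evL]

lemma evL_cons (γ : ℝ) (M : Mono) (L : List Mono) (t qv q1v : ℝ) :
    evL γ (M :: L) t qv q1v = M.ev γ t qv q1v + evL γ L t qv q1v := by simp [evL]

lemma evL_append (γ : ℝ) (L1 L2 : List Mono) (t qv q1v : ℝ) :
    evL γ (L1 ++ L2) t qv q1v = evL γ L1 t qv q1v + evL γ L2 t qv q1v := by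
  simp [evL]

lemma hasDerivAt_evL_t (γ : ℝ) (L : List Mono) {t : ℝ} (ht : 0 < t) {qv : ℝ} (hq : 0 ≤ qv)
    (q1v : ℝ) :
    HasDerivAt (fun t' => evL γ L t' qv q1v) (evL γ (dT γ L) t qv q1v) t := by
  induction L with
  | nil => simpa [evL, dT] using hasDerivAt_const t (0:ℝ)
  | cons M L ih =>
    have h := (hasDerivAt_ev_t γ M ht hq q1v).add ih
    have : dT γ (M :: L) = dTm γ M ++ dT γ L := by simp [dT]
    rw [this, ]
    simp only [evL_cons, evL_append] at *
    exact h

lemma hasDerivAt_evL_x (γ : ℝ) (L : List Mono) {t : ℝ} (ht : 0 < t) {Q Q1 : ℝ → ℝ} {θ : ℝ}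
    (hQd : HasDerivAt Q (Q1 θ) θ) (hQ1d : HasDerivAt Q1 ((1 - Q θ)/4) θ)
    (hq : 0 ≤ Q θ) :
    HasDerivAt (fun θ' => evL γ L t (Q θ') (Q1 θ'))
      (evL γ (dX γ L) t (Q θ) (Q1 θ)) θ := by
  induction L with
  | nil => simpa [evL, dX] using hasDerivAt_const θ (0:ℝ)
  | cons M L ih =>
    have h := (hasDerivAt_ev_x γ M ht hQd hQ1d hq).add ih
    have hco : dX γ (M :: L) = dXm γ M ++ dX γ L := by simp [dX]
    rw [hco, evL_append]
    simp only [evL_cons]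
    exact h

lemma iteratedDeriv_congr_on_open {U : Set ℝ} (hU : IsOpen U) {f g : ℝ → ℝ} (m : ℕ)
    (h : ∀ s ∈ U, f s = g s) : ∀ s ∈ U, iteratedDeriv m f s = iteratedDeriv m g s := by
  induction m with
  | zero => simpa using h
  | succ m ih =>
    intro s hs
    rw [iteratedDeriv_succ, iteratedDeriv_succ]
    apply Filter.EventuallyEq.deriv_eq
    filter_upwards [hU.mem_nhds hs] with y hy using ih y hy

lemma iteratedDeriv_evL_t (γ : ℝ) (m : ℕ) {qv : ℝ} (hq : 0 ≤ qv) (q1v : ℝ) :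
    ∀ (L : List Mono) (t : ℝ), 0 < t →
      iteratedDeriv m (fun t' => evL γ L t' qv q1v) t
        = evL γ ((dT γ)^[m] L) t qv q1v := by
  induction m with
  | zero => intro L t ht; simp
  | succ m ih =>
    intro L t ht
    rw [iteratedDeriv_succ]
    have h1 : deriv (iteratedDeriv m fun t' => evL γ L t' qv q1v) t
        = deriv (fun t' => evL γ ((dT γ)^[m] L) t' qv q1v) t := by
      apply Filter.EventuallyEq.deriv_eq
      filter_upwards [isOpen_Ioi.mem_nhds ht] with s hs using ih L s hs
    rw [h1, (hasDerivAt_evL_t γ _ ht hq q1v).deriv, Function.iterate_succ_apply']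

lemma iteratedDeriv_evL_x (γ : ℝ) (n : ℕ) {t : ℝ} (ht : 0 < t) {Q Q1 : ℝ → ℝ}
    (hQd : ∀ θ, HasDerivAt Q (Q1 θ) θ) (hQ1d : ∀ θ, HasDerivAt Q1 ((1 - Q θ)/4) θ)
    (hq : ∀ θ, 0 ≤ Q θ) :
    ∀ (L : List Mono) (θ : ℝ),
      iteratedDeriv n (fun θ' => evL γ L t (Q θ') (Q1 θ')) θ
        = evL γ ((dX γ)^[n] L) t (Q θ) (Q1 θ) := by
  induction n with
  | zero => intro L θ; simp
  | succ n ih =>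
    intro L θ
    rw [iteratedDeriv_succ']
    have hd : (deriv fun θ' => evL γ L t (Q θ') (Q1 θ')) =
        fun θ' => evL γ (dX γ L) t (Q θ') (Q1 θ') := by
      funext θ'
      exact (hasDerivAt_evL_x γ L ht (hQd θ') (hQ1d θ') (hq θ')).deriv
    rw [hd, ih (dX γ L) θ, ← Function.iterate_succ_apply]

def Inv (γ : ℝ) (N : ℕ) (M : Mono) : Prop :=
  (2*M.k + 1 ≤ M.a + M.e + 2*M.f + N) ∧
  (γ = 1 → (M.c = 0 ∨ 1 ≤ M.j ∨ (N = 0 ∧ M.e = 0 ∧ M.f = 0)))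

lemma inv_dTm {γ : ℝ} {N : ℕ} {M : Mono} (h : Inv γ N M) :
    ∀ M' ∈ dTm γ M, Inv γ (N+1) M' := by
  obtain ⟨h1, h2⟩ := h
  intro M' hM'
  simp only [dTm, List.mem_cons, List.not_mem_nil, or_false] at hM'
  rcases hM' with h|h|h|h <;> subst h <;> refine ⟨by simp; omega, fun hγ => ?_⟩ <;>
    [skip; exact Or.inr (Or.inl (by simp)); exact Or.inr (Or.inl (by simp));
     exact Or.inr (Or.inl (by simp))]
  rcases h2 hγ with hc | hj | ⟨hN, he, hf⟩
  · exact Or.inl (by simp [hc])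
  · exact Or.inr (Or.inl hj)
  · rcases Nat.eq_zero_or_pos M.j with hj0 | hj1
    · exact Or.inl (by simp [hγ, hj0])
    · exact Or.inr (Or.inl hj1)

lemma inv_dXm {γ : ℝ} {N : ℕ} {M : Mono} (h : Inv γ N M) :
    ∀ M' ∈ dXm γ M, Inv γ (N+1) M' := by
  obtain ⟨h1, h2⟩ := h
  intro M' hM'
  simp only [dXm, List.mem_cons, List.not_mem_nil, or_false] at hM'
  rcases hM' with h|h|h|h <;> subst h <;> refine ⟨by simp; omega, fun hγ => ?_⟩
  · rcases h2 hγ with hc | hj | ⟨hN, he, hf⟩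
    · exact Or.inl (by simp [hc])
    · exact Or.inr (Or.inl hj)
    · exact Or.inl (by simp [he])
  · rcases h2 hγ with hc | hj | ⟨hN, he, hf⟩
    · exact Or.inl (by simp [hc])
    · exact Or.inr (Or.inl hj)
    · exact Or.inl (by simp [he])
  · rcases h2 hγ with hc | hj | ⟨hN, he, hf⟩
    · exact Or.inl (by simp [hc])
    · exact Or.inr (Or.inl hj)
    · exact Or.inl (by simp [hf])
  · exact Or.inr (Or.inl (by simp))

lemma inv_dT {γ : ℝ} {N : ℕ} {L : List Mono} (h : ∀ M ∈ L, Inv γ N M) :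
    ∀ M' ∈ dT γ L, Inv γ (N+1) M' := by
  intro M' hM'
  rw [dT, List.mem_flatMap] at hM'
  obtain ⟨M, hM, hM'2⟩ := hM'
  exact inv_dTm (h M hM) M' hM'2

lemma inv_dX {γ : ℝ} {N : ℕ} {L : List Mono} (h : ∀ M ∈ L, Inv γ N M) :
    ∀ M' ∈ dX γ L, Inv γ (N+1) M' := by
  intro M' hM'
  rw [dX, List.mem_flatMap] at hM'
  obtain ⟨M, hM, hM'2⟩ := hM'
  exact inv_dXm (h M hM) M' hM'2

lemma exp_half_le_two : Real.exp (1/2 : ℝ) ≤ 2 := by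
  have h1 : Real.exp (1/2 : ℝ) * Real.exp (1/2 : ℝ) = Real.exp 1 := by
    rw [← Real.exp_add]; norm_num
  nlinarith [Real.exp_one_lt_d9, Real.exp_pos (1/2 : ℝ)]

lemma two_le_exp_half : (3:ℝ)/2 ≤ Real.exp (1/2 : ℝ) := by
  have := Real.add_one_le_exp (1/2 : ℝ); linarith

lemma half_le_xx {t : ℝ} (ht0 : 0 < t) (ht : t ≤ 1) : 1/2 ≤ xx t := by
  have h1 : Real.exp (-(1/2) : ℝ) ≤ xx t := by
    rw [xx]; exact Real.exp_le_exp.2 (by linarith)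
  have hm : Real.exp (1/2:ℝ) * Real.exp (-(1/2):ℝ) = 1 := by
    rw [← Real.exp_add]; norm_num
  nlinarith [exp_half_le_two, Real.exp_pos (-(1/2):ℝ), Real.exp_pos (1/2:ℝ)]

lemma xx_le_of_one_lt {t : ℝ} (ht : 1 < t) : xx t ≤ 2/3 := by
  have h1 : xx t ≤ Real.exp (-(1/2) : ℝ) := by
    rw [xx]; exact Real.exp_le_exp.2 (by linarith)
  have hm : Real.exp (1/2:ℝ) * Real.exp (-(1/2):ℝ) = 1 := by
    rw [← Real.exp_add]; norm_num
  nlinarith [two_le_exp_half, Real.exp_pos (-(1/2):ℝ), Real.exp_pos (1/2:ℝ)]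

lemma one_sub_xx_ge {t : ℝ} (ht0 : 0 < t) (ht : t ≤ 1) : t/3 ≤ 1 - xx t := by
  have hE := Real.add_one_le_exp (t/2)
  have hEp := Real.exp_pos (t/2)
  have hxt : xx t = (Real.exp (t/2))⁻¹ := by rw [xx, Real.exp_neg]
  have h4 : (Real.exp (t/2))⁻¹ * Real.exp (t/2) = 1 := inv_mul_cancel₀ hEp.ne'
  have key : t/3 * Real.exp (t/2) ≤ Real.exp (t/2) - 1 := by nlinarith
  rw [hxt]
  nlinarith [inv_nonneg.2 hEp.le]

set_option maxHeartbeats 2000000 in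
lemma mono_bound (γ ζ : ℝ) (hγ : 1 ≤ γ) (N : ℕ) (M : Mono) (hM : Inv γ N M)
    (hζ0 : 0 ≤ ζ) (hζ1 : γ ≠ 1 → ζ ≤ (γ-1)/2) (hζ2 : γ = 1 → ζ ≤ 1/2) (hζ3 : γ = 1 → N = 0 → ζ = 0) :
    ∃ B : ℝ, 0 ≤ B ∧ ∀ t qv q1v : ℝ, 0 < t → 0 ≤ qv → qv ≤ 2 → q1v^2 ≤ qv → |q1v| ≤ 1 →
      (t ≤ 1 → |M.ev γ t qv q1v| ≤ B * (t^2 + qv) ^ ((1:ℝ)/2 - γ - (N:ℝ)/2)) ∧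
      (1 < t → |M.ev γ t qv q1v| ≤ B * Real.exp (-ζ * t)) := by
  set τ : ℝ := (1:ℝ)/2 - γ - (N:ℝ)/2 with hτdef
  set σ : ℝ := ((M.a:ℝ)+(M.e:ℝ)+2*(M.f:ℝ))/2 - (γ+(M.k:ℝ)) with hσdef
  have hστ : 0 ≤ σ - τ := by
    have h1 := hM.1
    have : (2*(M.k:ℝ) + 1 : ℝ) ≤ (M.a:ℝ) + M.e + 2*M.f + N := by exact_mod_cast h1
    rw [hσdef, hτdef]; linarith
  have hτneg : τ ≤ 0 := by rw [hτdef]; have : (0:ℝ) ≤ (N:ℝ) := Nat.cast_nonneg N; linarith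
  refine ⟨|M.c| * ((5:ℝ)^(σ-τ) * (9:ℝ)^(-τ)) + |M.c| * ((2:ℝ)^M.f * (9:ℝ)^(γ+(M.k:ℝ))), ?_, ?_⟩
  · positivity
  intro t qv q1v ht0 hq0 hq2 hq1sq hq1ab
  have hx0 := xx_pos t
  have hx1 := xx_lt_one ht0
  have hE := Efn_pos ht0 hq0
  have hp0 : (0:ℝ) ≤ γ - 1 + (M.j:ℝ) := by
    have : (0:ℝ) ≤ (M.j:ℝ) := Nat.cast_nonneg _
    linarith
  have habs : |M.ev γ t qv q1v| = |M.c| * (xx t ^ (γ - 1 + (M.j:ℝ))) * ((1-xx t)^M.a)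
      * (|q1v|^M.e) * (qv^M.f) * (Efn t qv ^ (-(γ+(M.k:ℝ)))) := by
    rw [Mono.ev, abs_mul, abs_mul, abs_mul, abs_mul, abs_mul, abs_pow, abs_pow, abs_pow,
      abs_of_nonneg (Real.rpow_nonneg hx0.le _),
      abs_of_nonneg (show (0:ℝ) ≤ 1 - xx t by linarith),
      abs_of_nonneg hq0,
      abs_of_nonneg (Real.rpow_nonneg hE.le _)]
  constructor
  · -- small t
    intro ht1
    have hxh := half_le_xx ht0 ht1
    have h13 := one_sub_xx_ge ht0 ht1
    have hEq : qv ≤ Efn t qv := by unfold Efn; nlinarith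
    have hE5 : Efn t qv ≤ 5 := by unfold Efn; nlinarith
    have hEt : t^2 + qv ≤ 9 * Efn t qv := by
      unfold Efn; nlinarith [mul_nonneg (by linarith : (0:ℝ) ≤ 1 - xx t - t/3) (by linarith : (0:ℝ) ≤ 1 - xx t + t/3)]
    set r : ℝ := Real.sqrt (Efn t qv) with hrdef
    have hr0 : 0 ≤ r := Real.sqrt_nonneg _
    have hr2 : r^2 = Efn t qv := Real.sq_sqrt hE.le
    have b1 : xx t ^ (γ - 1 + (M.j:ℝ)) ≤ 1 := Real.rpow_le_one hx0.le hx1.le hp0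
    have b2 : 1 - xx t ≤ r := by
      have hsq : (1-xx t)^2 ≤ Efn t qv := by unfold Efn; nlinarith
      calc 1 - xx t = Real.sqrt ((1-xx t)^2) := (Real.sqrt_sq (by linarith)).symm
        _ ≤ r := Real.sqrt_le_sqrt hsq
    have b3 : |q1v| ≤ r := by
      calc |q1v| = Real.sqrt (q1v^2) := (Real.sqrt_sq_eq_abs q1v).symm
        _ ≤ r := Real.sqrt_le_sqrt (by linarith)
    have b4 : qv ≤ r^2 := by rw [hr2]; exact hEq
    have hprod : (1-xx t)^M.a * |q1v|^M.e * qv^M.f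
        ≤ Efn t qv ^ (((M.a:ℝ)+(M.e:ℝ)+2*(M.f:ℝ))/2) := by
      have hh : (1-xx t)^M.a * |q1v|^M.e * qv^M.f ≤ r^M.a * r^M.e * (r^2)^M.f := by
        have n1 : (1-xx t)^M.a ≤ r^M.a := pow_le_pow_left₀ (by linarith) b2 _
        have n2 : |q1v|^M.e ≤ r^M.e := pow_le_pow_left₀ (abs_nonneg _) b3 _
        have n3 : qv^M.f ≤ (r^2)^M.f := pow_le_pow_left₀ hq0 b4 _
        have := mul_le_mul (mul_le_mul n1 n2 (pow_nonneg (abs_nonneg _) _)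
          (pow_nonneg hr0 _)) n3 (pow_nonneg hq0 _)
          (mul_nonneg (pow_nonneg hr0 _) (pow_nonneg hr0 _))
        exact this
      have heq : r^M.a * r^M.e * (r^2)^M.f = Efn t qv ^ (((M.a:ℝ)+(M.e:ℝ)+2*(M.f:ℝ))/2) := by
        rw [← pow_mul, ← pow_add, ← pow_add]
        rw [show r = Efn t qv ^ ((1:ℝ)/2) from by rw [hrdef, Real.sqrt_eq_rpow]]
        rw [← Real.rpow_natCast (Efn t qv ^ ((1:ℝ)/2)) (M.a + M.e + 2*M.f),
          ← Real.rpow_mul hE.le]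
        congr 1
        push_cast
        ring
      rw [← heq]; exact hh
    have step1 : |M.ev γ t qv q1v| ≤ |M.c| * Efn t qv ^ σ := by
      rw [habs]
      have hEσ : Efn t qv ^ (((M.a:ℝ)+(M.e:ℝ)+2*(M.f:ℝ))/2) * Efn t qv ^ (-(γ+(M.k:ℝ)))
          = Efn t qv ^ σ := by
        rw [← Real.rpow_add hE, hσdef]; ring_nf
      calc |M.c| * (xx t ^ (γ - 1 + (M.j:ℝ))) * ((1-xx t)^M.a)
            * (|q1v|^M.e) * (qv^M.f) * (Efn t qv ^ (-(γ+(M.k:ℝ))))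
          = |M.c| * (xx t ^ (γ - 1 + (M.j:ℝ))) * ((1-xx t)^M.a * |q1v|^M.e * qv^M.f
              * Efn t qv ^ (-(γ+(M.k:ℝ)))) := by ring
        _ ≤ |M.c| * 1 * (Efn t qv ^ (((M.a:ℝ)+(M.e:ℝ)+2*(M.f:ℝ))/2)
              * Efn t qv ^ (-(γ+(M.k:ℝ)))) := by
            apply mul_le_mul
            · exact mul_le_mul (le_refl _) b1 (Real.rpow_nonneg hx0.le _) (abs_nonneg _)
            · exact mul_le_mul_of_nonneg_right hprod (Real.rpow_nonneg hE.le _)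
            · exact mul_nonneg (mul_nonneg (mul_nonneg (pow_nonneg (by linarith) _)
                (pow_nonneg (abs_nonneg _) _)) (pow_nonneg hq0 _)) (Real.rpow_nonneg hE.le _)
            · positivity
        _ = |M.c| * Efn t qv ^ σ := by rw [hEσ]; ring
    have step2 : Efn t qv ^ σ ≤ (5:ℝ)^(σ-τ) * ((9:ℝ)^(-τ) * (t^2+qv)^τ) := by
      have s1 : Efn t qv ^ σ = Efn t qv ^ (σ-τ) * Efn t qv ^ τ := by
        rw [← Real.rpow_add hE]; ring_nf
      have s2 : Efn t qv ^ (σ-τ) ≤ (5:ℝ)^(σ-τ) := Real.rpow_le_rpow hE.le hE5 hστ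
      have s3 : Efn t qv ^ τ ≤ ((t^2+qv)/9)^τ := by
        apply Real.rpow_le_rpow_of_nonpos (by positivity) (by linarith) hτneg
      have s4 : ((t^2+qv)/9 : ℝ)^τ = (9:ℝ)^(-τ) * (t^2+qv)^τ := by
        rw [Real.div_rpow (by positivity) (by norm_num), Real.rpow_neg (by norm_num)]
        ring
      calc Efn t qv ^ σ = Efn t qv ^ (σ-τ) * Efn t qv ^ τ := s1
        _ ≤ (5:ℝ)^(σ-τ) * ((t^2+qv)/9)^τ := by
            apply mul_le_mul s2 s3 (Real.rpow_nonneg hE.le _) (Real.rpow_nonneg (by norm_num) _)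
        _ = (5:ℝ)^(σ-τ) * ((9:ℝ)^(-τ) * (t^2+qv)^τ) := by rw [s4]
    calc |M.ev γ t qv q1v| ≤ |M.c| * Efn t qv ^ σ := step1
      _ ≤ |M.c| * ((5:ℝ)^(σ-τ) * ((9:ℝ)^(-τ) * (t^2+qv)^τ)) :=
          mul_le_mul_of_nonneg_left step2 (abs_nonneg _)
      _ = (|M.c| * ((5:ℝ)^(σ-τ) * (9:ℝ)^(-τ))) * (t^2+qv)^τ := by ring
      _ ≤ (|M.c| * ((5:ℝ)^(σ-τ) * (9:ℝ)^(-τ)) + |M.c| * ((2:ℝ)^M.f * (9:ℝ)^(γ+(M.k:ℝ))))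
            * (t^2+qv)^τ := by
          apply mul_le_mul_of_nonneg_right _ (Real.rpow_nonneg (by nlinarith [sq_nonneg t]) _)
          have hnn : (0:ℝ) ≤ |M.c| * ((2:ℝ)^M.f * (9:ℝ)^(γ+(M.k:ℝ))) := by positivity
          linarith
  · -- large t
    intro ht1
    have hx23 := xx_le_of_one_lt ht1
    have hE9 : (1:ℝ)/9 ≤ Efn t qv := by unfold Efn; nlinarith
    have hζp : ζ ≤ (γ - 1 + (M.j:ℝ))/2 ∨ M.c = 0 := by
      by_cases hγ1 : γ = 1
      · rcases hM.2 hγ1 with hc | hj | ⟨hN, _, _⟩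
        · exact Or.inr hc
        · left
          have h1j : (1:ℝ) ≤ (M.j:ℝ) := by exact_mod_cast hj
          rw [hγ1]; linarith [hζ2 hγ1]
        · left; rw [hζ3 hγ1 hN]; linarith
      · left
        have := hζ1 hγ1
        have : (0:ℝ) ≤ (M.j:ℝ) := Nat.cast_nonneg _
        linarith [hζ1 hγ1]
    rcases hζp with hζp | hc
    swap
    · rw [habs, hc]
      simp only [abs_zero, zero_mul]
      positivity
    have b1 : xx t ^ (γ - 1 + (M.j:ℝ)) ≤ Real.exp (-ζ * t) := by
      rw [xx, ← Real.exp_mul]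
      apply Real.exp_le_exp.2
      nlinarith [mul_nonneg (by linarith : (0:ℝ) ≤ t)
        (by linarith : (0:ℝ) ≤ (γ - 1 + (M.j:ℝ))/2 - ζ)]
    have b2 : (1-xx t)^M.a ≤ 1 := pow_le_one₀ (by linarith) (by linarith)
    have b3 : |q1v|^M.e ≤ 1 := pow_le_one₀ (abs_nonneg _) hq1ab
    have b4 : qv^M.f ≤ (2:ℝ)^M.f := pow_le_pow_left₀ hq0 hq2 _
    have b5 : Efn t qv ^ (-(γ+(M.k:ℝ))) ≤ (9:ℝ)^(γ+(M.k:ℝ)) := by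
      have hgk : (0:ℝ) ≤ γ + (M.k:ℝ) := by positivity
      rw [Real.rpow_neg hE.le]
      have h1 : ((1:ℝ)/9)^(γ+(M.k:ℝ)) ≤ Efn t qv ^ (γ+(M.k:ℝ)) :=
        Real.rpow_le_rpow (by norm_num) hE9 hgk
      have h2 : ((1:ℝ)/9)^(γ+(M.k:ℝ)) = ((9:ℝ)^(γ+(M.k:ℝ)))⁻¹ := by
        rw [one_div, Real.inv_rpow (by norm_num : (0:ℝ) ≤ 9)]
      rw [h2] at h1
      have h3 : (0:ℝ) < ((9:ℝ)^(γ+(M.k:ℝ)))⁻¹ := by positivity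
      calc (Efn t qv ^ (γ+(M.k:ℝ)))⁻¹ ≤ (((9:ℝ)^(γ+(M.k:ℝ)))⁻¹)⁻¹ := by
            apply inv_anti₀ h3 h1
        _ = (9:ℝ)^(γ+(M.k:ℝ)) := inv_inv _
    rw [habs]
    calc |M.c| * (xx t ^ (γ - 1 + (M.j:ℝ))) * ((1-xx t)^M.a)
          * (|q1v|^M.e) * (qv^M.f) * (Efn t qv ^ (-(γ+(M.k:ℝ))))
        ≤ |M.c| * Real.exp (-ζ * t) * 1 * 1 * (2:ℝ)^M.f * (9:ℝ)^(γ+(M.k:ℝ)) := by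
          have c1 : |M.c| * (xx t ^ (γ - 1 + (M.j:ℝ))) ≤ |M.c| * Real.exp (-ζ*t) :=
            mul_le_mul_of_nonneg_left b1 (abs_nonneg _)
          have c2 := mul_le_mul c1 b2 (pow_nonneg (by linarith) _) (by positivity)
          have c3 := mul_le_mul c2 b3 (pow_nonneg (abs_nonneg _) _) (by positivity)
          have c4 := mul_le_mul c3 b4 (pow_nonneg hq0 _) (by positivity)
          exact mul_le_mul c4 b5 (Real.rpow_nonneg hE.le _) (by positivity)
      _ = (|M.c| * ((2:ℝ)^M.f * (9:ℝ)^(γ+(M.k:ℝ)))) * Real.exp (-ζ * t) := by ring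
      _ ≤ (|M.c| * ((5:ℝ)^(σ-τ) * (9:ℝ)^(-τ)) + |M.c| * ((2:ℝ)^M.f * (9:ℝ)^(γ+(M.k:ℝ))))
            * Real.exp (-ζ * t) := by
          apply mul_le_mul_of_nonneg_right _ (Real.exp_pos _).le
          have hnn : (0:ℝ) ≤ |M.c| * ((5:ℝ)^(σ-τ) * (9:ℝ)^(-τ)) := by positivity
          linarith

lemma list_bound (γ ζ : ℝ) (hγ : 1 ≤ γ) (N : ℕ) (L : List Mono) (hL : ∀ M ∈ L, Inv γ N M)
    (hζ0 : 0 ≤ ζ) (hζ1 : γ ≠ 1 → ζ ≤ (γ-1)/2) (hζ2 : γ = 1 → ζ ≤ 1/2) (hζ3 : γ = 1 → N = 0 → ζ = 0) :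
    ∃ B : ℝ, 0 ≤ B ∧ ∀ t qv q1v : ℝ, 0 < t → 0 ≤ qv → qv ≤ 2 → q1v^2 ≤ qv → |q1v| ≤ 1 →
      (t ≤ 1 → |evL γ L t qv q1v| ≤ B * (t^2 + qv) ^ ((1:ℝ)/2 - γ - (N:ℝ)/2)) ∧
      (1 < t → |evL γ L t qv q1v| ≤ B * Real.exp (-ζ * t)) := by
  induction L with
  | nil =>
    refine ⟨0, le_refl 0, fun t qv q1v ht0 hq0 hq2 h1 h2 => ⟨fun _ => ?_, fun _ => ?_⟩⟩ <;>
      simp [evL_nil]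
  | cons M L ih =>
    obtain ⟨B1, hB1, h1⟩ := mono_bound γ ζ hγ N M (hL M (by simp)) hζ0 hζ1 hζ2 hζ3
    obtain ⟨B2, hB2, h2⟩ := ih (fun M' hM' => hL M' (by simp [hM']))
    refine ⟨B1 + B2, by linarith, fun t qv q1v ht0 hq0 hq2 hq1 hq1' => ⟨?_, ?_⟩⟩
    · intro ht1
      have e1 := (h1 t qv q1v ht0 hq0 hq2 hq1 hq1').1 ht1
      have e2 := (h2 t qv q1v ht0 hq0 hq2 hq1 hq1').1 ht1
      rw [evL_cons, add_mul]
      exact le_trans (abs_add_le _ _) (add_le_add e1 e2)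
    · intro ht1
      have e1 := (h1 t qv q1v ht0 hq0 hq2 hq1 hq1').2 ht1
      have e2 := (h2 t qv q1v ht0 hq0 hq2 hq1 hq1').2 ht1
      rw [evL_cons, add_mul]
      exact le_trans (abs_add_le _ _) (add_le_add e1 e2)

noncomputable def L0 (γ : ℝ) : List Mono :=
  [⟨(2:ℝ)^γ, 0,1,0,0,0⟩, ⟨-((2:ℝ)^(γ-1)), 0,2,0,0,0⟩]

lemma inv_L0 (γ : ℝ) : ∀ M ∈ L0 γ, Inv γ 0 M := by
  intro M hM
  simp only [L0, List.mem_cons, List.not_mem_nil, or_false] at hM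
  rcases hM with h|h <;> subst h <;> exact ⟨by simp, fun _ => Or.inr (Or.inr ⟨rfl, rfl, rfl⟩)⟩

lemma psi_eq_evL (γ : ℝ) {t qv : ℝ} (ht : 0 < t) (hq : 0 ≤ qv) (q1v : ℝ) :
    Real.sinh (t/2) / (Real.cosh (t/2) - 1 + qv) ^ γ = evL γ (L0 γ) t qv q1v := by
  have hx0 := xx_pos t
  have hx1 := xx_lt_one ht
  have hE := Efn_pos ht hq
  have hprod : Real.exp (t/2) * xx t = 1 := by rw [xx, ← Real.exp_add]; norm_num
  have hxe : Real.exp (t/2) = (xx t)⁻¹ := by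
    field_simp at hprod ⊢; linarith [hprod]
  have hsinh : Real.sinh (t/2) = ((xx t)⁻¹ - xx t)/2 := by
    rw [Real.sinh_eq, hxe]; rfl
  have h2 : (Real.cosh (t/2) - 1 + qv) * (2 * xx t) = Efn t qv := by
    rw [Real.cosh_eq]
    have hb : Real.exp (-(t/2)) = xx t := rfl
    rw [hb]
    unfold Efn
    nlinarith [hprod]
  have h3 : Real.cosh (t/2) - 1 + qv = Efn t qv / (2 * xx t) := by
    rw [← h2]; field_simp
  have hgsplit : xx t ^ γ = xx t ^ (γ-1) * xx t := by
    rw [show γ = (γ-1)+1 by ring, Real.rpow_add_one hx0.ne']; ring_nf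
  have hgsplit2 : (2:ℝ) ^ γ = (2:ℝ) ^ (γ-1) * 2 := by
    rw [show γ = (γ-1)+1 by ring, Real.rpow_add_one (by norm_num : (2:ℝ) ≠ 0)]; ring_nf
  have hEpos : (0:ℝ) < Efn t qv ^ γ := Real.rpow_pos_of_pos hE _
  rw [h3, Real.div_rpow hE.le (by positivity), Real.mul_rpow (by norm_num : (0:ℝ) ≤ 2) hx0.le,
    hsinh]
  simp only [evL, L0, Mono.ev, List.map_cons, List.map_nil, List.sum_cons, List.sum_nil,
    Nat.cast_zero, add_zero, pow_zero, pow_one, mul_one, pow_two]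
  rw [Real.rpow_neg hE.le, hgsplit, hgsplit2]
  have hxg : (0:ℝ) < xx t ^ (γ-1) := Real.rpow_pos_of_pos hx0 _
  field_simp
  ring

section Qfacts

variable {φ u v : ℝ}

noncomputable def q1fn (φ u v θ : ℝ) : ℝ :=
  (v * Real.sin (θ/2) * Real.cos (φ/2) - u * Real.cos (θ/2) * Real.sin (φ/2))/2

lemma hasDerivAt_qfun (φ u v θ : ℝ) :
    HasDerivAt (fun θ' => qfun θ' φ u v) (q1fn φ u v θ) θ := by
  have hhalf : HasDerivAt (fun θ' : ℝ => θ'/2) (1/2) θ := (hasDerivAt_id θ).div_const 2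
  have hsin : HasDerivAt (fun θ' : ℝ => Real.sin (θ'/2)) (Real.cos (θ/2) * (1/2)) θ := hhalf.sin
  have hcos : HasDerivAt (fun θ' : ℝ => Real.cos (θ'/2)) (-Real.sin (θ/2) * (1/2)) θ := hhalf.cos
  have h1 : HasDerivAt (fun θ' : ℝ => u * Real.sin (θ'/2) * Real.sin (φ/2))
      (u * (Real.cos (θ/2) * (1/2)) * Real.sin (φ/2)) θ :=
    (hsin.const_mul u).mul_const (Real.sin (φ/2))
  have h2 : HasDerivAt (fun θ' : ℝ => v * Real.cos (θ'/2) * Real.cos (φ/2))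
      (v * (-Real.sin (θ/2) * (1/2)) * Real.cos (φ/2)) θ :=
    (hcos.const_mul v).mul_const (Real.cos (φ/2))
  have h := (h1.const_sub 1).sub h2
  refine h.congr_deriv ?_
  rw [q1fn]; ring

lemma hasDerivAt_q1fn (φ u v θ : ℝ) :
    HasDerivAt (q1fn φ u v) ((1 - qfun θ φ u v)/4) θ := by
  have hhalf : HasDerivAt (fun θ' : ℝ => θ'/2) (1/2) θ := (hasDerivAt_id θ).div_const 2
  have hsin : HasDerivAt (fun θ' : ℝ => Real.sin (θ'/2)) (Real.cos (θ/2) * (1/2)) θ := hhalf.sin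
  have hcos : HasDerivAt (fun θ' : ℝ => Real.cos (θ'/2)) (-Real.sin (θ/2) * (1/2)) θ := hhalf.cos
  have h1 : HasDerivAt (fun θ' : ℝ => v * Real.sin (θ'/2) * Real.cos (φ/2))
      (v * (Real.cos (θ/2) * (1/2)) * Real.cos (φ/2)) θ :=
    (hsin.const_mul v).mul_const (Real.cos (φ/2))
  have h2 : HasDerivAt (fun θ' : ℝ => u * Real.cos (θ'/2) * Real.sin (φ/2))
      (u * (-Real.sin (θ/2) * (1/2)) * Real.sin (φ/2)) θ :=
    (hcos.const_mul u).mul_const (Real.sin (φ/2))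
  have h := (h1.sub h2).div_const 2
  refine h.congr_deriv ?_
  rw [qfun]; ring

lemma qfun_mem (hu : u ∈ Set.Icc (-1:ℝ) 1) (hv : v ∈ Set.Icc (-1:ℝ) 1) (θ : ℝ) :
    0 ≤ qfun θ φ u v ∧ qfun θ φ u v ≤ 2 := by
  obtain ⟨hu1, hu2⟩ := hu
  obtain ⟨hv1, hv2⟩ := hv
  have hs := Real.sin_sq_add_cos_sq (θ/2)
  have hp := Real.sin_sq_add_cos_sq (φ/2)
  have hs0 : |Real.sin (θ/2)|^2 + |Real.cos (θ/2)|^2 = 1 := by rw [sq_abs, sq_abs]; exact hs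
  have hp0 : |Real.sin (φ/2)|^2 + |Real.cos (φ/2)|^2 = 1 := by rw [sq_abs, sq_abs]; exact hp
  set S := |Real.sin (θ/2)|
  set C := |Real.cos (θ/2)|
  set Sp := |Real.sin (φ/2)|
  set Cp := |Real.cos (φ/2)|
  have hS : 0 ≤ S := abs_nonneg _
  have hC : 0 ≤ C := abs_nonneg _
  have hSp : 0 ≤ Sp := abs_nonneg _
  have hCp : 0 ≤ Cp := abs_nonneg _
  have hs' : S^2 + C^2 = 1 := hs0
  have hp' : Sp^2 + Cp^2 = 1 := hp0
  have key : S * Sp + C * Cp ≤ 1 := by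
    nlinarith [sq_nonneg (S*Cp - C*Sp), mul_nonneg (mul_nonneg hS hSp) (mul_nonneg hC hCp)]
  have a1 : u * Real.sin (θ/2) * Real.sin (φ/2) ≤ S * Sp := by
    calc u * Real.sin (θ/2) * Real.sin (φ/2) ≤ |u * Real.sin (θ/2) * Real.sin (φ/2)| :=
          le_abs_self _
      _ = |u| * (S * Sp) := by rw [abs_mul, abs_mul]; ring
      _ ≤ 1 * (S * Sp) := by
          apply mul_le_mul_of_nonneg_right (abs_le.2 ⟨hu1, hu2⟩) (by positivity)
      _ = S * Sp := one_mul _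
  have a1' : -(u * Real.sin (θ/2) * Real.sin (φ/2)) ≤ S * Sp := by
    calc -(u * Real.sin (θ/2) * Real.sin (φ/2)) ≤ |u * Real.sin (θ/2) * Real.sin (φ/2)| :=
          neg_le_abs _
      _ = |u| * (S * Sp) := by rw [abs_mul, abs_mul]; ring
      _ ≤ 1 * (S * Sp) := by
          apply mul_le_mul_of_nonneg_right (abs_le.2 ⟨hu1, hu2⟩) (by positivity)
      _ = S * Sp := one_mul _
  have a2 : v * Real.cos (θ/2) * Real.cos (φ/2) ≤ C * Cp := by
    calc v * Real.cos (θ/2) * Real.cos (φ/2) ≤ |v * Real.cos (θ/2) * Real.cos (φ/2)| :=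
          le_abs_self _
      _ = |v| * (C * Cp) := by rw [abs_mul, abs_mul]; ring
      _ ≤ 1 * (C * Cp) := by
          apply mul_le_mul_of_nonneg_right (abs_le.2 ⟨hv1, hv2⟩) (by positivity)
      _ = C * Cp := one_mul _
  have a2' : -(v * Real.cos (θ/2) * Real.cos (φ/2)) ≤ C * Cp := by
    calc -(v * Real.cos (θ/2) * Real.cos (φ/2)) ≤ |v * Real.cos (θ/2) * Real.cos (φ/2)| :=
          neg_le_abs _
      _ = |v| * (C * Cp) := by rw [abs_mul, abs_mul]; ring
      _ ≤ 1 * (C * Cp) := by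
          apply mul_le_mul_of_nonneg_right (abs_le.2 ⟨hv1, hv2⟩) (by positivity)
      _ = C * Cp := one_mul _
  constructor
  · rw [qfun]; linarith
  · rw [qfun]; linarith

lemma q1fn_abs_le_one (hu : u ∈ Set.Icc (-1:ℝ) 1) (hv : v ∈ Set.Icc (-1:ℝ) 1) (θ : ℝ) :
    |q1fn φ u v θ| ≤ 1 := by
  obtain ⟨hu1, hu2⟩ := hu
  obtain ⟨hv1, hv2⟩ := hv
  have m1 : |v * Real.sin (θ/2) * Real.cos (φ/2)| ≤ 1 := by
    rw [abs_mul, abs_mul]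
    have i1 := Real.abs_sin_le_one (θ/2)
    have i2 := Real.abs_cos_le_one (φ/2)
    have huv : |v| ≤ 1 := abs_le.2 ⟨hv1, hv2⟩
    exact mul_le_one₀ (mul_le_one₀ huv (abs_nonneg _) i1) (abs_nonneg _) i2
  have m2 : |u * Real.cos (θ/2) * Real.sin (φ/2)| ≤ 1 := by
    rw [abs_mul, abs_mul]
    have i1 := Real.abs_cos_le_one (θ/2)
    have i2 := Real.abs_sin_le_one (φ/2)
    have huv : |u| ≤ 1 := abs_le.2 ⟨hu1, hu2⟩
    exact mul_le_one₀ (mul_le_one₀ huv (abs_nonneg _) i1) (abs_nonneg _) i2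
  rw [q1fn]
  rw [abs_le] at m1 m2 ⊢
  constructor <;> [linarith [m1.1, m2.2]; linarith [m1.2, m2.1]]

set_option maxHeartbeats 1000000 in
lemma q1fn_sq_le (hu : u ∈ Set.Icc (-1:ℝ) 1) (hv : v ∈ Set.Icc (-1:ℝ) 1) (θ : ℝ) :
    (q1fn φ u v θ)^2 ≤ qfun θ φ u v := by
  obtain ⟨hu1, hu2⟩ := hu
  obtain ⟨hv1, hv2⟩ := hv
  have hs := Real.sin_sq_add_cos_sq (θ/2)
  have hp := Real.sin_sq_add_cos_sq (φ/2)
  set s := Real.sin (θ/2)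
  set c := Real.cos (θ/2)
  set sp := Real.sin (φ/2)
  set cp := Real.cos (φ/2)
  have c1 : (s*cp - c*sp)^2 + (s*sp + c*cp)^2 = 1 := by
    linear_combination (sp^2 + cp^2) * hs + hp
  have c2 : (s*cp + c*sp)^2 + (s*sp - c*cp)^2 = 1 := by
    linear_combination (sp^2 + cp^2) * hs + hp
  have g11 : (s*cp - c*sp)^2 ≤ 2*(1 - s*sp - c*cp) := by
    nlinarith [c1, sq_nonneg (1 - s*sp - c*cp)]
  have g1m : (s*cp + c*sp)^2 ≤ 2*(1 - s*sp + c*cp) := by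
    nlinarith [c2, sq_nonneg (1 - s*sp + c*cp)]
  have gm1 : (s*cp + c*sp)^2 ≤ 2*(1 + s*sp - c*cp) := by
    nlinarith [c2, sq_nonneg (1 + s*sp - c*cp)]
  have gmm : (s*cp - c*sp)^2 ≤ 2*(1 + s*sp + c*cp) := by
    nlinarith [c1, sq_nonneg (1 + s*sp + c*cp)]
  have T11 : 0 ≤ (1+u)*(1+v) * (2*(1 - s*sp - c*cp) - (s*cp - c*sp)^2) :=
    mul_nonneg (mul_nonneg (by linarith) (by linarith)) (by linarith)
  have T1m : 0 ≤ (1+u)*(1-v) * (2*(1 - s*sp + c*cp) - (s*cp + c*sp)^2) :=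
    mul_nonneg (mul_nonneg (by linarith) (by linarith)) (by linarith)
  have Tm1 : 0 ≤ (1-u)*(1+v) * (2*(1 + s*sp - c*cp) - (s*cp + c*sp)^2) :=
    mul_nonneg (mul_nonneg (by linarith) (by linarith)) (by linarith)
  have Tmm : 0 ≤ (1-u)*(1-v) * (2*(1 + s*sp + c*cp) - (s*cp - c*sp)^2) :=
    mul_nonneg (mul_nonneg (by linarith) (by linarith)) (by linarith)
  have B1 : 0 ≤ (c*sp)^2 * (1 - u^2) := mul_nonneg (sq_nonneg _) (by nlinarith)
  have B2 : 0 ≤ (s*cp)^2 * (1 - v^2) := mul_nonneg (sq_nonneg _) (by nlinarith)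
  rw [q1fn, qfun]
  nlinarith [T11, T1m, Tm1, Tmm, B1, B2]

end Qfacts

lemma inv_iter_dT {γ : ℝ} (m : ℕ) {N : ℕ} {L : List Mono} (h : ∀ M ∈ L, Inv γ N M) :
    ∀ M ∈ (dT γ)^[m] L, Inv γ (N+m) M := by
  induction m generalizing N L with
  | zero => simpa using h
  | succ m ih =>
    rw [Function.iterate_succ_apply]
    intro M hM
    have := ih (inv_dT h) M hM
    rwa [show N + 1 + m = N + (m+1) by omega] at this

lemma inv_iter_dX {γ : ℝ} (n : ℕ) {N : ℕ} {L : List Mono} (h : ∀ M ∈ L, Inv γ N M) :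
    ∀ M ∈ (dX γ)^[n] L, Inv γ (N+n) M := by
  induction n generalizing N L with
  | zero => simpa using h
  | succ n ih =>
    rw [Function.iterate_succ_apply]
    intro M hM
    have := ih (inv_dX h) M hM
    rwa [show N + 1 + n = N + (n+1) by omega] at this

end PsiAux

set_option maxHeartbeats 1000000 in
/-- Lemma 4.8 in [NoSjogren], first estimate. -/
theorem Psi_derivative_bounds (α β : ℝ) (hα : -(1 / 2) ≤ α) (hβ : -(1 / 2) ≤ β) (m n : ℕ) :
    ∃ C ζ : ℝ, 0 < C ∧
      ((m = 0 ∧ n = 0 ∧ α + β = -1) → ζ = 0) ∧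
      (¬(m = 0 ∧ n = 0 ∧ α + β = -1) → 0 < ζ) ∧
      ∀ θ ∈ Ioo (0 : ℝ) π, ∀ φ ∈ Ioo (0 : ℝ) π,
        ∀ u ∈ Icc (-1 : ℝ) 1, ∀ v ∈ Icc (-1 : ℝ) 1, ∀ t : ℝ, 0 < t →
          (t ≤ 1 →
            |iteratedDeriv n
                (fun θ' => iteratedDeriv m (fun t' => Psi α β t' (qfun θ' φ u v)) t) θ|
              ≤ C * (t ^ 2 + qfun θ φ u v) ^
                  (-(α + β + 3 / 2) - ((m : ℝ) + (n : ℝ)) / 2)) ∧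
          (1 < t →
            |iteratedDeriv n
                (fun θ' => iteratedDeriv m (fun t' => Psi α β t' (qfun θ' φ u v)) t) θ|
              ≤ C * Real.exp (-ζ * t)) := by
  have hγ : 1 ≤ α + β + 2 := by linarith
  set ζ : ℝ := if α + β = -1 then (if m + n = 0 then 0 else 1/2) else (α+β+1)/2 with hζdef
  have hζ0 : 0 ≤ ζ := by
    rw [hζdef]; split_ifs <;> [norm_num; norm_num; linarith]
  have hζ1 : α + β + 2 ≠ 1 → ζ ≤ (α + β + 2 - 1)/2 := by
    intro h
    have hne : α + β ≠ -1 := fun hc => h (by rw [hc]; norm_num)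
    rw [hζdef, if_neg hne]; linarith
  have hζ2 : α + β + 2 = 1 → ζ ≤ 1/2 := by
    intro h
    have heq : α + β = -1 := by linarith
    rw [hζdef, if_pos heq]; split_ifs <;> norm_num
  have hζ3 : α + β + 2 = 1 → m + n = 0 → ζ = 0 := by
    intro h hmn
    have heq : α + β = -1 := by linarith
    rw [hζdef, if_pos heq, if_pos hmn]
  have hLfin : ∀ M ∈ (PsiAux.dX (α+β+2))^[n] ((PsiAux.dT (α+β+2))^[m] (PsiAux.L0 (α+β+2))),
      PsiAux.Inv (α+β+2) (m+n) M := by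
    have h1 := PsiAux.inv_iter_dT (γ := α+β+2) m (PsiAux.inv_L0 (α+β+2))
    have h2 := PsiAux.inv_iter_dX (γ := α+β+2) n h1
    intro M hM
    have := h2 M hM
    rwa [show 0 + m + n = m + n by omega] at this
  obtain ⟨B, hB, hbound⟩ := PsiAux.list_bound (α+β+2) ζ hγ (m+n)
      ((PsiAux.dX (α+β+2))^[n] ((PsiAux.dT (α+β+2))^[m] (PsiAux.L0 (α+β+2)))) hLfin
      hζ0 hζ1 hζ2 hζ3
  refine ⟨B + 1, ζ, by linarith, ?_, ?_, ?_⟩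
  · rintro ⟨hm, hn, hab⟩
    rw [hζdef, if_pos hab, if_pos (by omega)]
  · intro hne
    rw [hζdef]
    split_ifs with h1 h2
    · exact absurd ⟨by omega, by omega, h1⟩ hne
    · norm_num
    · have : -1 < α + β := lt_of_le_of_ne (by linarith) (Ne.symm h1)
      linarith
  intro θ hθ φ hφ u hu v hv t ht
  have hQd : ∀ θ', HasDerivAt (fun θ'' => qfun θ'' φ u v) (PsiAux.q1fn φ u v θ') θ' :=
    fun θ' => PsiAux.hasDerivAt_qfun φ u v θ'
  have hQ1d : ∀ θ', HasDerivAt (PsiAux.q1fn φ u v) ((1 - qfun θ' φ u v)/4) θ' :=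
    fun θ' => PsiAux.hasDerivAt_q1fn φ u v θ'
  have hq0 : ∀ θ', 0 ≤ qfun θ' φ u v := fun θ' => (PsiAux.qfun_mem hu hv θ').1
  have hq2 : qfun θ φ u v ≤ 2 := (PsiAux.qfun_mem hu hv θ).2
  have hkey : iteratedDeriv n
      (fun θ' => iteratedDeriv m (fun t' => Psi α β t' (qfun θ' φ u v)) t) θ
      = PsiAux.evL (α+β+2) ((PsiAux.dX (α+β+2))^[n] ((PsiAux.dT (α+β+2))^[m]
          (PsiAux.L0 (α+β+2)))) t (qfun θ φ u v) (PsiAux.q1fn φ u v θ) := by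
    have hfun : (fun θ' => iteratedDeriv m (fun t' => Psi α β t' (qfun θ' φ u v)) t)
        = fun θ' => PsiAux.evL (α+β+2) ((PsiAux.dT (α+β+2))^[m] (PsiAux.L0 (α+β+2))) t
            (qfun θ' φ u v) (PsiAux.q1fn φ u v θ') := by
      funext θ'
      have heq : ∀ s ∈ Set.Ioi (0:ℝ), Psi α β s (qfun θ' φ u v)
          = PsiAux.evL (α+β+2) (PsiAux.L0 (α+β+2)) s (qfun θ' φ u v)
              (PsiAux.q1fn φ u v θ') := by
        intro s hs
        simp only [Psi]
        exact PsiAux.psi_eq_evL (α+β+2) hs (hq0 θ') _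
      have h1 := PsiAux.iteratedDeriv_congr_on_open isOpen_Ioi m heq t ht
      rw [h1]
      exact PsiAux.iteratedDeriv_evL_t (α+β+2) m (hq0 θ') _ (PsiAux.L0 (α+β+2)) t ht
    rw [hfun]
    exact PsiAux.iteratedDeriv_evL_x (α+β+2) n ht hQd hQ1d hq0 _ θ
  rw [hkey]
  have hfacts := hbound t (qfun θ φ u v) (PsiAux.q1fn φ u v θ) ht (hq0 θ) hq2
    (PsiAux.q1fn_sq_le hu hv θ) (PsiAux.q1fn_abs_le_one hu hv θ)
  have hbase : (0:ℝ) ≤ t^2 + qfun θ φ u v := by nlinarith [sq_nonneg t, hq0 θ]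
  constructor
  · intro ht1
    have h := hfacts.1 ht1
    have hexp : ((1:ℝ)/2 - (α+β+2) - ((m+n : ℕ):ℝ)/2)
        = (-(α + β + 3 / 2) - ((m:ℝ) + (n:ℝ))/2) := by push_cast; ring
    rw [hexp] at h
    calc _ ≤ B * (t ^ 2 + qfun θ φ u v) ^ (-(α + β + 3 / 2) - ((m:ℝ) + (n:ℝ))/2) := h
      _ ≤ (B+1) * (t ^ 2 + qfun θ φ u v) ^ (-(α + β + 3 / 2) - ((m:ℝ) + (n:ℝ))/2) := by
        apply mul_le_mul_of_nonneg_right (by linarith) (Real.rpow_nonneg hbase _)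
  · intro ht1
    have h := hfacts.2 ht1
    calc _ ≤ B * Real.exp (-ζ * t) := h
      _ ≤ (B+1) * Real.exp (-ζ * t) := by
        apply mul_le_mul_of_nonneg_right (by linarith) (Real.exp_pos _).le
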